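/- The colexicographic order on finite sets of ordinals is well-founded: there is no infinite strictly decreasing sequence of finite sets of ordinals under the relation a < b iff the largest element of the symmetric difference of a and b lies in b. -/

import Mathlib

/-- The colexicographic strict order on finite sets of ordinals: `a < b` iff the largest
element of the symmetric difference `(a ∪ b) \ (a ∩ b)` belongs to `b`. -/
def colex (a b : Finset Ordinal) : Prop :=
  ∃ h : ((a ∪ b) \ (a ∩ b)).Nonempty, ((a ∪ b) \ (a ∩ b)).max' h ∈ b

open Finset

open Finset.Colex

open scoped symmDiff

lemma colex_iff {a b : Finset Ordinal} : colex a b ↔ toColex a < toColex b := by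
  rw [toColex_lt_toColex_iff_max'_mem]
  have hs : a ∆ b = (a ∪ b) \ (a ∩ b) := symmDiff_eq_sup_sdiff_inf a b
  constructor
  · rintro ⟨h, hm⟩
    have hne : a ≠ b := by
      rw [← Finset.symmDiff_nonempty, hs]; exact h
    refine ⟨hne, ?_⟩
    have heq : (a ∆ b).max' (Finset.symmDiff_nonempty.2 hne) = ((a ∪ b) \ (a ∩ b)).max' h := by
      congr 1
    rw [heq]; exact hm
  · rintro ⟨hne, hm⟩
    have h : ((a ∪ b) \ (a ∩ b)).Nonempty := by
      rw [← hs]; exact Finset.symmDiff_nonempty.2 hne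
    refine ⟨h, ?_⟩
    have heq : ((a ∪ b) \ (a ∩ b)).max' h = (a ∆ b).max' (Finset.symmDiff_nonempty.2 hne) := by
      congr 1
      exact hs.symm
    rw [heq]; exact hm

lemma erase_symmDiff_erase {s t : Finset Ordinal} {c : Ordinal} (hcs : c ∈ s) (hct : c ∈ t) :
    (s.erase c) ∆ (t.erase c) = s ∆ t := by
  ext x
  by_cases hxc : x = c
  . subst hxc
    simp [Finset.mem_symmDiff, hcs, hct]
  . have h1 : x ∈ s.erase c ↔ x ∈ s := by simp [hxc]
    have h2 : x ∈ t.erase c ↔ x ∈ t := by simp [hxc]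
    simp only [Finset.mem_symmDiff, h1, h2]

lemma aux_bound (m : Ordinal) :
    ∀ f : ℕ → Finset Ordinal, (∀ n, toColex (f (n + 1)) < toColex (f n)) →
      (∀ n, ∀ x ∈ f n, x < m) → False := by
  induction m using Ordinal.induction with
  | h m IH =>
    intro f hf hbd
    -- each f n is nonempty
    have hne : ∀ n, (f n).Nonempty := by
      intro n
      rcases Finset.eq_empty_or_nonempty (f n) with h | h
      · exfalso
        have := hf n
        rw [h] at this
        exact not_lt_bot this
      · exact h
    set M : ℕ → Ordinal := fun n => (f n).max' (hne n) with hM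
    have hstep : ∀ n, M (n + 1) ≤ M n := by
      intro n
      have hle : toColex (f (n + 1)) ≤ toColex (f n) := (hf n).le
      have := forall_le_mono (a := M n) hle (fun b hb => Finset.le_max' _ _ hb)
      exact this _ (Finset.max'_mem _ _)
    -- find N where M attains its minimum
    obtain ⟨_, ⟨N, rfl⟩, hNmin⟩ := Ordinal.lt_wf.has_min (Set.range M) ⟨M 0, ⟨0, rfl⟩⟩
    have hconst : ∀ k, M (N + k) = M N := by
      intro k
      induction k with
      | zero => rfl
      | succ k ih =>
        have h1 : M (N + k + 1) ≤ M N := le_trans (hstep (N + k)) (le_of_eq ih)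
        have h2 : ¬ M (N + k + 1) < M N := hNmin _ ⟨N + k + 1, rfl⟩
        rw [show N + (k + 1) = N + k + 1 from rfl]
        exact le_antisymm h1 (not_lt.1 h2)
    have hmem : ∀ k, M N ∈ f (N + k) := by
      intro k
      rw [← hconst k]
      exact Finset.max'_mem _ _
    set g : ℕ → Finset Ordinal := fun n => (f (N + n)).erase (M N) with hg
    have hgdesc : ∀ n, toColex (g (n + 1)) < toColex (g n) := by
      intro n
      have h1 := hf (N + n)
      rw [toColex_lt_toColex_iff_max'_mem] at h1 ⊢
      obtain ⟨hne', hmax⟩ := h1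
      have hsd : g (n + 1) ∆ g n = f (N + n + 1) ∆ f (N + n) := by
        have := erase_symmDiff_erase (hmem (n + 1)) (hmem n)
        rwa [show N + (n + 1) = N + n + 1 from rfl] at this
      have hgne : g (n + 1) ≠ g n := by
        intro h
        apply hne'
        have h0 : f (N + n + 1) ∆ f (N + n) = ⊥ := by
          rw [← hsd, h, symmDiff_self]
        rwa [symmDiff_eq_bot] at h0
      refine ⟨hgne, ?_⟩
      have hmaxeq : (g (n + 1) ∆ g n).max' (Finset.symmDiff_nonempty.2 hgne)
          = (f (N + n + 1) ∆ f (N + n)).max' (Finset.symmDiff_nonempty.2 hne') := by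
        congr 1
      rw [hmaxeq]
      set c := (f (N + n + 1) ∆ f (N + n)).max' (Finset.symmDiff_nonempty.2 hne')
      have hcsd : c ∈ f (N + n + 1) ∆ f (N + n) := Finset.max'_mem _ _
      have hcne : c ≠ M N := by
        intro hc
        rw [Finset.mem_symmDiff, hc] at hcsd
        rcases hcsd with ⟨_, h2⟩ | ⟨_, h2⟩
        · exact h2 (hmem n)
        · exact h2 (hmem (n + 1))
      exact Finset.mem_erase.2 ⟨hcne, hmax⟩
    have hgbd : ∀ n, ∀ x ∈ g n, x < M N := by
      intro n x hx
      rw [hg] at hx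
      simp only [Finset.mem_erase] at hx
      have : x ≤ M (N + n) := Finset.le_max' _ _ hx.2
      rw [hconst n] at this
      exact lt_of_le_of_ne this hx.1
    have hMNm : M N < m := hbd N _ (Finset.max'_mem _ _)
    exact IH (M N) hMNm g hgdesc hgbd

/-- The colexicographic order on finite sets of ordinals is well-founded: there is no
infinite strictly decreasing sequence. -/
theorem colex_no_descending_sequence :
    ¬ ∃ f : ℕ → Finset Ordinal, ∀ n, colex (f (n + 1)) (f n) := by
  rintro ⟨f, hf⟩
  have hf' : ∀ n, toColex (f (n + 1)) < toColex (f n) :=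
    fun n => colex_iff.1 (hf n)
  have hne0 : (f 0).Nonempty := by
    rcases Finset.eq_empty_or_nonempty (f 0) with h | h
    · exfalso
      have := hf' 0
      rw [h] at this
      exact not_lt_bot this
    · exact h
  have hle : ∀ n, toColex (f n) ≤ toColex (f 0) := by
    intro n
    induction n with
    | zero => exact le_rfl
    | succ n ih => exact le_trans (hf' n).le ih
  refine aux_bound (Order.succ ((f 0).max' hne0)) f hf' ?_
  intro n x hx
  have := forall_le_mono (a := (f 0).max' hne0) (hle n)
    (fun b hb => Finset.le_max' _ _ hb) x hx
  exact Order.lt_succ_iff.2 this
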